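/- Let n be a natural number and let t < ρ(n), where ρ(n) is the least i such that the i-th binary digit of n is 0, and assume 2^t ≤ n. Then the binomial coefficient C(n − 2^t, 2^t) is even. -/

import Mathlib

/-- ρ(n) is the least bit position where `n` has binary digit 0. -/
noncomputable def rho (n : ℕ) : ℕ := sInf {i | n.testBit i = false}

/-- If bit `t` of `m` is 0, then `C(m, 2^t)` is even (Lucas' theorem mod 2). -/
lemma choose_pow_even_of_testBit_false : ∀ (t m : ℕ), m.testBit t = false →
    m.choose (2 ^ t) % 2 = 0 := by
  intro t
  induction t with
  | zero =>
    intro m hm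
    rw [pow_zero, Nat.choose_one_right]
    rw [Nat.testBit_zero, decide_eq_false_iff_not] at hm
    omega
  | succ t ih =>
    intro m hm
    have key := Choose.choose_modEq_choose_mod_mul_choose_div_nat (n := m) (k := 2 ^ (t + 1))
      (p := 2)
    have h1 : 2 ^ (t + 1) % 2 = 0 := by
      simp [Nat.pow_succ, Nat.mul_mod_left]
    have h2 : 2 ^ (t + 1) / 2 = 2 ^ t := by
      rw [Nat.pow_succ, Nat.mul_div_cancel]; norm_num
    rw [h1, h2, Nat.choose_zero_right, one_mul] at key
    have hbit : (m / 2).testBit t = false := by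
      rw [← Nat.testBit_succ]; exact hm
    have := ih (m / 2) hbit
    unfold Nat.ModEq at key
    omega

theorem choose_sub_pow_even (n t : ℕ) (ht : t < rho n) (hle : 2 ^ t ≤ n) :
    Even ((n - 2 ^ t).choose (2 ^ t)) := by
  -- bit t of n is 1
  have htb : n.testBit t = true := by
    by_contra h
    have h' : n.testBit t = false := by simpa using h
    have : rho n ≤ t := csInf_le (OrderBot.bddBelow _) h'
    omega
  -- hence bit t of n - 2^t is 0
  have hq : n / 2 ^ t % 2 = 1 := by
    rw [Nat.testBit_eq_decide_div_mod_eq] at htb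
    simpa using htb
  have hp : 0 < 2 ^ t := Nat.pow_pos (by norm_num)
  have hmod := Nat.mod_lt n hp
  have hdm := Nat.div_add_mod n (2 ^ t)
  have hq1 : 1 ≤ n / 2 ^ t := (Nat.one_le_div_iff hp).mpr hle
  obtain ⟨q, hq'⟩ : ∃ q, n / 2 ^ t = q + 1 := ⟨n / 2 ^ t - 1, by omega⟩
  have hsub : n - 2 ^ t = 2 ^ t * q + n % 2 ^ t := by
    rw [hq', Nat.mul_succ] at hdm
    omega
  have hdiv : (n - 2 ^ t) / 2 ^ t = q := by
    rw [hsub, Nat.mul_add_div hp, Nat.div_eq_of_lt hmod]; omega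
  have hbit : (n - 2 ^ t).testBit t = false := by
    rw [Nat.testBit_eq_decide_div_mod_eq, hdiv]
    simp only [decide_eq_false_iff_not]
    omega
  have := choose_pow_even_of_testBit_false t (n - 2 ^ t) hbit
  exact Nat.even_iff.mpr this
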